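/- In the family of SMC instances I_n from the support lower bound construction (n odd, α > n+2, valuations as specified), the fractional matching μ = ∑_{i=1}^{(n+1)/2} (1/α)·μ^(i) + (1 − (n+1)/(2α))·μ^opt is a well-defined stable fractional matching with W(μ) > (n−1)α, where μ^opt = {(m_1,w_1)} ∪ {(m_{2i},w_{2i+1}),(m_{2i+1},w_{2i}) : i=1,…,(n−1)/2}, μ^(i) for i ≤ (n−1)/2 is obtained from μ^opt by replacing {(m_1,w_1),(m_{2i},w_{2i+1})} with {(m_1,w_{2i+1}),(m_{2i},w_1)}, and μ^((n+1)/2) is obtained from μ^opt by replacing {(m_1,w_1),(m_n,w_{n−1})} with {(m_1,w_{n−1}),(m_n,w_1)}. -/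

import Mathlib

open Finset

/-- A fractional matching: nonnegative weights with row and column sums at most 1. -/
def IsFrac {n : ℕ} (μ : Fin n → Fin n → ℝ) : Prop :=
  (∀ m w, 0 ≤ μ m w) ∧ (∀ m, ∑ w, μ m w ≤ 1) ∧ (∀ w, ∑ m, μ m w ≤ 1)

/-- An integral matching takes values in {0,1}. -/
def IsIntegralM {n : ℕ} (μ : Fin n → Fin n → ℝ) : Prop :=
  ∀ m w, μ m w = 0 ∨ μ m w = 1

/-- A complete (perfect) matching: all row and column sums equal 1. -/
def IsPerfect {n : ℕ} (μ : Fin n → Fin n → ℝ) : Prop :=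
  (∀ m, ∑ w, μ m w = 1) ∧ (∀ w, ∑ m, μ m w = 1)

/-- Utility of man `m` under matching `μ`. -/
def uM {n : ℕ} (U μ : Fin n → Fin n → ℝ) (m : Fin n) : ℝ := ∑ w, U m w * μ m w

/-- Utility of woman `w` under matching `μ`. -/
def vW {n : ℕ} (V μ : Fin n → Fin n → ℝ) (w : Fin n) : ℝ := ∑ m, V m w * μ m w

/-- Stability: no blocking pair. -/
def IsStable {n : ℕ} (U V μ : Fin n → Fin n → ℝ) : Prop :=
  ∀ m w, U m w ≤ uM U μ m ∨ V m w ≤ vW V μ w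

/-- Social welfare. -/
def welfare {n : ℕ} (U V μ : Fin n → Fin n → ℝ) : ℝ :=
  (∑ m, uM U μ m) + (∑ w, vW V μ w)

/-- Valuations of the men in the instance `I_n` (0-indexed: man `m_{i+1}` is index `i`):
`U(m_i,w_i)=1`, `U(m_{2t},w_1)=α`, `U(m_{2t+1},w_{2t})=α`, all else `0`. -/
def U18 (n : ℕ) (α : ℝ) (i j : Fin n) : ℝ :=
  if i = j then 1
  else if i.val % 2 = 1 ∧ j.val = 0 then α
  else if i.val % 2 = 0 ∧ j.val + 1 = i.val then α
  else 0

/-- Valuations of the women in the instance `I_n`: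
`V(m_i,w_i)=1`, `V(m_{2t},w_{2t+1})=α`, `V(m_n,w_1)=α`, all else `0`. -/
def V18 (n : ℕ) (α : ℝ) (i j : Fin n) : ℝ :=
  if i = j then 1
  else if i.val % 2 = 1 ∧ j.val = i.val + 1 then α
  else if i.val = n - 1 ∧ j.val = 0 then α
  else 0

/-- `μ^opt = {(m_1,w_1)} ∪ {(m_{2t},w_{2t+1}), (m_{2t+1},w_{2t})}` (0-indexed). -/
def muOpt19 (n : ℕ) (i j : Fin n) : ℝ :=
  if i.val = 0 ∧ j.val = 0 then 1
  else if i.val % 2 = 1 ∧ j.val = i.val + 1 then 1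
  else if i.val % 2 = 0 ∧ 0 < i.val ∧ j.val + 1 = i.val then 1
  else 0

/-- `μ^(t)` for `1 ≤ t ≤ (n-1)/2`: replace `{(m_1,w_1),(m_{2t},w_{2t+1})}` in `μ^opt`
by `{(m_1,w_{2t+1}),(m_{2t},w_1)}`. -/
def nu19 (n : ℕ) (t : ℕ) (i j : Fin n) : ℝ :=
  if i.val = 0 then (if j.val = 2 * t then 1 else 0)
  else if i.val = 2 * t - 1 then (if j.val = 0 then 1 else 0)
  else muOpt19 n i j

/-- `μ^((n+1)/2)`: replace `{(m_1,w_1),(m_n,w_{n-1})}` in `μ^opt`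
by `{(m_1,w_{n-1}),(m_n,w_1)}`. -/
def nuLast19 (n : ℕ) (i j : Fin n) : ℝ :=
  if i.val = 0 then (if j.val = n - 2 then 1 else 0)
  else if i.val = n - 1 then (if j.val = 0 then 1 else 0)
  else muOpt19 n i j

/-- `μ = ∑_{t=1}^{(n+1)/2} (1/α)·μ^(t) + (1 − (n+1)/(2α))·μ^opt`. -/
noncomputable def mu19 (n : ℕ) (α : ℝ) (i j : Fin n) : ℝ :=
  (∑ t ∈ Finset.Icc 1 ((n - 1) / 2), (1 / α) * nu19 n t i j)
    + (1 / α) * nuLast19 n i j + (1 - ((n : ℝ) + 1) / (2 * α)) * muOpt19 n i j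


def sigP (i : ℕ) : ℕ := if i = 0 then 0 else if i % 2 = 1 then i + 1 else i - 1
def sigT (t i : ℕ) : ℕ := if i = 0 then 2*t else if i = 2*t-1 then 0 else sigP i
def tauT (t j : ℕ) : ℕ := if j = 0 then 2*t-1 else if j = 2*t then 0 else sigP j
def sigL (n i : ℕ) : ℕ := if i = 0 then n-2 else if i = n-1 then 0 else sigP i
def tauL (n j : ℕ) : ℕ := if j = 0 then n-1 else if j = n-2 then 0 else sigP j

lemma tauT_sigT (t i : ℕ) (ht : 1 ≤ t) : tauT t (sigT t i) = i := by
  unfold sigT; split_ifs <;> unfold tauT sigP <;> split_ifs <;> first | omega | (exfalso; assumption)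

lemma sigT_tauT (t j : ℕ) (ht : 1 ≤ t) : sigT t (tauT t j) = j := by
  unfold tauT; split_ifs <;> unfold sigT sigP <;> split_ifs <;> first | omega | (exfalso; assumption)

lemma tauL_sigL (n i : ℕ) (hn : n % 2 = 1) (h3 : 3 ≤ n) (hi : i < n) :
    tauL n (sigL n i) = i := by
  unfold sigL; split_ifs <;> unfold tauL sigP <;> split_ifs <;> first | omega | (exfalso; assumption)

lemma sigL_tauL (n j : ℕ) (hn : n % 2 = 1) (h3 : 3 ≤ n) (hj : j < n) :
    sigL n (tauL n j) = j := by
  unfold tauL; split_ifs <;> unfold sigL sigP <;> split_ifs <;> first | omega | (exfalso; assumption)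

lemma sigP_lt (n i : ℕ) (hn : n % 2 = 1) (hi : i < n) : sigP i < n := by
  unfold sigP; split_ifs <;> omega

lemma sigT_lt (n t i : ℕ) (hn : n % 2 = 1) (ht : 2*t < n) (hi : i < n) : sigT t i < n := by
  unfold sigT sigP; split_ifs <;> omega

lemma tauT_lt (n t j : ℕ) (hn : n % 2 = 1) (ht : 2*t < n) (hj : j < n) : tauT t j < n := by
  unfold tauT sigP; split_ifs <;> omega

lemma sigL_lt (n i : ℕ) (hn : n % 2 = 1) (h3 : 3 ≤ n) (hi : i < n) : sigL n i < n := by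
  unfold sigL sigP; split_ifs <;> omega

lemma tauL_lt (n j : ℕ) (hn : n % 2 = 1) (h3 : 3 ≤ n) (hj : j < n) : tauL n j < n := by
  unfold tauL sigP; split_ifs <;> omega

-- Fin-valued versions (total via mod)
def fP {n : ℕ} (i : Fin n) : Fin n := ⟨sigP i.val % n, Nat.mod_lt _ i.pos⟩
def fT {n : ℕ} (t : ℕ) (i : Fin n) : Fin n := ⟨sigT t i.val % n, Nat.mod_lt _ i.pos⟩
def gT {n : ℕ} (t : ℕ) (j : Fin n) : Fin n := ⟨tauT t j.val % n, Nat.mod_lt _ j.pos⟩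
def fL {n : ℕ} (i : Fin n) : Fin n := ⟨sigL n i.val % n, Nat.mod_lt _ i.pos⟩
def gL {n : ℕ} (j : Fin n) : Fin n := ⟨tauL n j.val % n, Nat.mod_lt _ j.pos⟩

lemma fP_val {n : ℕ} (hn : n % 2 = 1) (i : Fin n) : (fP i).val = sigP i.val :=
  Nat.mod_eq_of_lt (sigP_lt n _ hn i.isLt)
lemma fT_val {n t : ℕ} (hn : n % 2 = 1) (ht : 2*t < n) (i : Fin n) :
    (fT t i).val = sigT t i.val := Nat.mod_eq_of_lt (sigT_lt n t _ hn ht i.isLt)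
lemma gT_val {n t : ℕ} (hn : n % 2 = 1) (ht : 2*t < n) (j : Fin n) :
    (gT t j).val = tauT t j.val := Nat.mod_eq_of_lt (tauT_lt n t _ hn ht j.isLt)
lemma fL_val {n : ℕ} (hn : n % 2 = 1) (h3 : 3 ≤ n) (i : Fin n) :
    (fL i).val = sigL n i.val := Nat.mod_eq_of_lt (sigL_lt n _ hn h3 i.isLt)
lemma gL_val {n : ℕ} (hn : n % 2 = 1) (h3 : 3 ≤ n) (j : Fin n) :
    (gL j).val = tauL n j.val := Nat.mod_eq_of_lt (tauL_lt n _ hn h3 j.isLt)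

lemma muOpt19_eq {n : ℕ} (i j : Fin n) :
    muOpt19 n i j = if j.val = sigP i.val then 1 else 0 := by
  unfold muOpt19 sigP
  split_ifs <;> first | rfl | (exfalso; first | omega | assumption)

lemma nu19_eq {n : ℕ} (t : ℕ) (i j : Fin n) :
    nu19 n t i j = if j.val = sigT t i.val then 1 else 0 := by
  unfold nu19; rw [muOpt19_eq]; unfold sigT sigP
  split_ifs <;> first | rfl | (exfalso; first | omega | assumption)

lemma nuLast19_eq {n : ℕ} (i j : Fin n) :
    nuLast19 n i j = if j.val = sigL n i.val then 1 else 0 := by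
  unfold nuLast19; rw [muOpt19_eq]; unfold sigL sigP
  split_ifs <;> first | rfl | (exfalso; first | omega | assumption)

lemma muOpt19_eq' {n : ℕ} (hn : n % 2 = 1) (i j : Fin n) :
    muOpt19 n i j = if i.val = sigP j.val then 1 else 0 := by
  rw [muOpt19_eq]
  by_cases h : (j : ℕ) = sigP i.val
  · rw [if_pos h, if_pos]; unfold sigP at h ⊢; split_ifs at h ⊢ <;> omega
  · rw [if_neg h, if_neg]; intro h'; apply h
    unfold sigP at h' ⊢; split_ifs at h' ⊢ <;> omega

lemma nu19_eq' {n : ℕ} {t : ℕ} (ht : 1 ≤ t) (i j : Fin n) :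
    nu19 n t i j = if i.val = tauT t j.val then 1 else 0 := by
  rw [nu19_eq]
  by_cases h : (j : ℕ) = sigT t i.val
  · rw [if_pos h, if_pos (by rw [h, tauT_sigT _ _ ht])]
  · rw [if_neg h, if_neg (fun h' => h (by rw [h', sigT_tauT _ _ ht]))]

lemma nuLast19_eq' {n : ℕ} (hn : n % 2 = 1) (h3 : 3 ≤ n) (i j : Fin n) :
    nuLast19 n i j = if i.val = tauL n j.val then 1 else 0 := by
  rw [nuLast19_eq]
  by_cases h : (j : ℕ) = sigL n i.val
  · rw [if_pos h, if_pos (by rw [h, tauL_sigL n _ hn h3 i.isLt])]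
  · rw [if_neg h, if_neg (fun h' => h (by rw [h', sigL_tauL n _ hn h3 j.isLt]))]

lemma sum_ind {n : ℕ} (f : Fin n → ℝ) (c : ℕ) (b : Fin n) (hb : b.val = c) :
    ∑ j : Fin n, f j * (if j.val = c then 1 else 0) = f b := by
  rw [Finset.sum_eq_single b]
  · rw [if_pos hb, mul_one]
  · intro x _ hx
    rw [if_neg (fun h => hx (Fin.ext (by rw [h, hb]))), mul_zero]
  · intro h; exact absurd (Finset.mem_univ _) h

lemma U18_val {n : ℕ} {α : ℝ} (i j : Fin n) :
    U18 n α i j = if i.val = j.val then (1:ℝ)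
      else if i.val % 2 = 1 ∧ j.val = 0 then α
      else if i.val % 2 = 0 ∧ j.val + 1 = i.val then α else 0 := by
  simp only [U18, Fin.ext_iff]

lemma V18_val {n : ℕ} {α : ℝ} (i j : Fin n) :
    V18 n α i j = if i.val = j.val then (1:ℝ)
      else if i.val % 2 = 1 ∧ j.val = i.val + 1 then α
      else if i.val = n - 1 ∧ j.val = 0 then α else 0 := by
  simp only [V18, Fin.ext_iff]

lemma mu19_row {n k : ℕ} (hn : n = 2*k+1) (hk : 1 ≤ k) (m : Fin n) (g : Fin n → ℝ) (α : ℝ) :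
    ∑ w, g w * mu19 n α m w
      = (∑ t ∈ Finset.Icc 1 k, (1/α) * g (fT t m)) + (1/α) * g (fL m)
        + (1 - ((n:ℝ)+1)/(2*α)) * g (fP m) := by
  have h2 : n % 2 = 1 := by omega
  have hk2 : (n-1)/2 = k := by omega
  simp only [mu19, hk2, mul_add, Finset.sum_add_distrib, Finset.mul_sum]
  congr 1
  · congr 1
    · rw [Finset.sum_comm]
      refine Finset.sum_congr rfl (fun t ht => ?_)
      have h2t : 2*t < n := by simp only [Finset.mem_Icc] at ht; omega
      calc ∑ w, g w * ((1/α) * nu19 n t m w)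
          = (1/α) * ∑ w, g w * (if (w:ℕ) = sigT t m.val then 1 else 0) := by
            rw [Finset.mul_sum]
            exact Finset.sum_congr rfl (fun w _ => by rw [nu19_eq]; ring)
        _ = (1/α) * g (fT t m) := by rw [sum_ind _ _ _ (fT_val h2 h2t m)]
    · calc ∑ w, g w * ((1/α) * nuLast19 n m w)
          = (1/α) * ∑ w, g w * (if (w:ℕ) = sigL n m.val then 1 else 0) := by
            rw [Finset.mul_sum]
            exact Finset.sum_congr rfl (fun w _ => by rw [nuLast19_eq]; ring)
        _ = (1/α) * g (fL m) := by
            rw [sum_ind _ _ _ (fL_val h2 (by omega) m)]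
  · calc ∑ w, g w * ((1 - ((n:ℝ)+1)/(2*α)) * muOpt19 n m w)
        = (1 - ((n:ℝ)+1)/(2*α)) * ∑ w, g w * (if (w:ℕ) = sigP m.val then 1 else 0) := by
          rw [Finset.mul_sum]
          exact Finset.sum_congr rfl (fun w _ => by rw [muOpt19_eq]; ring)
      _ = (1 - ((n:ℝ)+1)/(2*α)) * g (fP m) := by rw [sum_ind _ _ _ (fP_val h2 m)]

lemma mu19_col {n k : ℕ} (hn : n = 2*k+1) (hk : 1 ≤ k) (w : Fin n) (g : Fin n → ℝ) (α : ℝ) :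
    ∑ m, g m * mu19 n α m w
      = (∑ t ∈ Finset.Icc 1 k, (1/α) * g (gT t w)) + (1/α) * g (gL w)
        + (1 - ((n:ℝ)+1)/(2*α)) * g (fP w) := by
  have h2 : n % 2 = 1 := by omega
  have h3 : 3 ≤ n := by omega
  have hk2 : (n-1)/2 = k := by omega
  simp only [mu19, hk2, mul_add, Finset.sum_add_distrib, Finset.mul_sum]
  congr 1
  · congr 1
    · rw [Finset.sum_comm]
      refine Finset.sum_congr rfl (fun t ht => ?_)
      simp only [Finset.mem_Icc] at ht
      have h2t : 2*t < n := by omega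
      calc ∑ m, g m * ((1/α) * nu19 n t m w)
          = (1/α) * ∑ m, g m * (if (m:ℕ) = tauT t w.val then 1 else 0) := by
            rw [Finset.mul_sum]
            exact Finset.sum_congr rfl (fun m _ => by rw [nu19_eq' ht.1]; ring)
        _ = (1/α) * g (gT t w) := by rw [sum_ind _ _ _ (gT_val h2 h2t w)]
    · calc ∑ m, g m * ((1/α) * nuLast19 n m w)
          = (1/α) * ∑ m, g m * (if (m:ℕ) = tauL n w.val then 1 else 0) := by
            rw [Finset.mul_sum]
            exact Finset.sum_congr rfl (fun m _ => by rw [nuLast19_eq' h2 h3]; ring)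
        _ = (1/α) * g (gL w) := by rw [sum_ind _ _ _ (gL_val h2 h3 w)]
  · calc ∑ m, g m * ((1 - ((n:ℝ)+1)/(2*α)) * muOpt19 n m w)
        = (1 - ((n:ℝ)+1)/(2*α)) * ∑ m, g m * (if (m:ℕ) = sigP w.val then 1 else 0) := by
          rw [Finset.mul_sum]
          exact Finset.sum_congr rfl (fun m _ => by rw [muOpt19_eq' h2]; ring)
      _ = (1 - ((n:ℝ)+1)/(2*α)) * g (fP w) := by rw [sum_ind _ _ _ (fP_val h2 w)]

lemma U18_e0 {n : ℕ} {α : ℝ} {i j : Fin n} (h1 : ¬ i.val = j.val)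
    (h2 : ¬(i.val % 2 = 1 ∧ j.val = 0)) (h3 : ¬(i.val % 2 = 0 ∧ j.val + 1 = i.val)) :
    U18 n α i j = 0 := by rw [U18_val, if_neg h1, if_neg h2, if_neg h3]

lemma U18_e1 {n : ℕ} {α : ℝ} {i j : Fin n} (h : i.val = j.val) : U18 n α i j = 1 := by
  rw [U18_val, if_pos h]

lemma U18_ea {n : ℕ} {α : ℝ} {i j : Fin n} (h1 : ¬ i.val = j.val)
    (h2 : i.val % 2 = 1 ∧ j.val = 0 ∨ i.val % 2 = 0 ∧ j.val + 1 = i.val) :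
    U18 n α i j = α := by
  rw [U18_val, if_neg h1]
  rcases h2 with h | h
  · rw [if_pos h]
  · rw [if_neg (by omega), if_pos h]

lemma V18_e0 {n : ℕ} {α : ℝ} {i j : Fin n} (h1 : ¬ i.val = j.val)
    (h2 : ¬(i.val % 2 = 1 ∧ j.val = i.val + 1)) (h3 : ¬(i.val = n - 1 ∧ j.val = 0)) :
    V18 n α i j = 0 := by rw [V18_val, if_neg h1, if_neg h2, if_neg h3]

lemma V18_e1 {n : ℕ} {α : ℝ} {i j : Fin n} (h : i.val = j.val) : V18 n α i j = 1 := by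
  rw [V18_val, if_pos h]

lemma V18_ea {n : ℕ} {α : ℝ} {i j : Fin n} (h1 : ¬ i.val = j.val)
    (h2 : i.val % 2 = 1 ∧ j.val = i.val + 1 ∨ i.val = n - 1 ∧ j.val = 0) :
    V18 n α i j = α := by
  rw [V18_val, if_neg h1]
  rcases h2 with h | h
  · rw [if_pos h]
  · rw [if_neg (by omega), if_pos h]

lemma uM_eval {n k : ℕ} (hn : n = 2*k+1) (hk : 1 ≤ k) {α : ℝ} (hα : 0 < α) (m : Fin n) :
    uM (U18 n α) (mu19 n α) m =
      if m.val = 0 then 1 - ((n:ℝ)+1)/(2*α)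
      else if m.val % 2 = 1 then 1
      else if m.val = n-1 then α - 1 else α := by
  have h2 : n % 2 = 1 := by omega
  have h3 : 3 ≤ n := by omega
  have hα0 : α ≠ 0 := ne_of_gt hα
  have hmlt := m.isLt
  have hcast : (n:ℝ) = 2*(k:ℝ)+1 := by rw [hn]; push_cast; ring
  rw [uM, mu19_row hn hk m (U18 n α m) α]
  by_cases hm0 : m.val = 0
  · rw [if_pos hm0]
    have e1 : ∑ t ∈ Finset.Icc 1 k, (1/α) * U18 n α m (fT t m) = 0 := by
      refine Finset.sum_eq_zero (fun t ht => ?_)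
      simp only [Finset.mem_Icc] at ht
      have hv : (fT t m).val = 2*t := by
        rw [fT_val h2 (by omega)]; unfold sigT sigP; split_ifs <;> omega
      rw [U18_e0 (by omega) (by omega) (by omega), mul_zero]
    have hvL : (fL m).val = n - 2 := by
      rw [fL_val h2 h3]; unfold sigL sigP; split_ifs <;> omega
    have hvP : (fP m).val = 0 := by
      rw [fP_val h2]; unfold sigP; split_ifs <;> omega
    rw [e1, U18_e0 (by omega) (by omega) (by omega), U18_e1 (by omega)]
    ring
  · rw [if_neg hm0]
    by_cases hm1 : m.val % 2 = 1
    · rw [if_pos hm1]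
      have hmem : (m.val + 1)/2 ∈ Finset.Icc 1 k := by
        simp only [Finset.mem_Icc]; omega
      have hzero : ∀ t ∈ Finset.Icc 1 k, t ≠ (m.val + 1)/2 →
          (1/α) * U18 n α m (fT t m) = 0 := by
        intro t ht hne
        simp only [Finset.mem_Icc] at ht
        have hv : (fT t m).val = m.val + 1 := by
          rw [fT_val h2 (by omega)]; unfold sigT sigP; split_ifs <;> omega
        rw [U18_e0 (by omega) (by omega) (by omega), mul_zero]
      rw [Finset.sum_eq_single_of_mem _ hmem hzero]
      have hv : (fT ((m.val + 1)/2) m).val = 0 := by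
        rw [fT_val h2 (by omega)]; unfold sigT sigP; split_ifs <;> omega
      have hvL : (fL m).val = m.val + 1 := by
        rw [fL_val h2 h3]; unfold sigL sigP; split_ifs <;> omega
      have hvP : (fP m).val = m.val + 1 := by
        rw [fP_val h2]; unfold sigP; split_ifs <;> omega
      rw [U18_ea (by omega) (Or.inl (by omega)),
        U18_e0 (by omega) (by omega) (by omega),
        U18_e0 (by omega) (by omega) (by omega)]
      field_simp; ring
    · rw [if_neg hm1]
      have hvP : (fP m).val = m.val - 1 := by
        rw [fP_val h2]; unfold sigP; split_ifs <;> omega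
      have e1 : ∑ t ∈ Finset.Icc 1 k, (1/α) * U18 n α m (fT t m) = (k:ℝ) := by
        have step : ∀ t ∈ Finset.Icc 1 k, (1/α) * U18 n α m (fT t m) = 1 := by
          intro t ht
          simp only [Finset.mem_Icc] at ht
          have hv : (fT t m).val = m.val - 1 := by
            rw [fT_val h2 (by omega)]; unfold sigT sigP; split_ifs <;> omega
          rw [U18_ea (by omega) (Or.inr (by omega))]; field_simp
        rw [Finset.sum_congr rfl step, Finset.sum_const, Nat.card_Icc]
        simp
      by_cases hml : m.val = n-1
      · rw [if_pos hml]
        have hvL : (fL m).val = 0 := by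
          rw [fL_val h2 h3]; unfold sigL sigP; split_ifs <;> omega
        rw [e1, U18_e0 (by omega) (by omega) (by omega),
          U18_ea (by omega) (Or.inr (by omega)), hcast]
        field_simp; ring
      · rw [if_neg hml]
        have hvL : (fL m).val = m.val - 1 := by
          rw [fL_val h2 h3]; unfold sigL sigP; split_ifs <;> omega
        rw [e1, U18_ea (by omega) (Or.inr (by omega)),
          U18_ea (by omega) (Or.inr (by omega)), hcast]
        field_simp; ring

lemma vW_eval {n k : ℕ} (hn : n = 2*k+1) (hk : 1 ≤ k) {α : ℝ} (hα : 0 < α) (w : Fin n) :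
    vW (V18 n α) (mu19 n α) w =
      if w.val = 0 then 2 - ((n:ℝ)+1)/(2*α)
      else if w.val % 2 = 1 then 0 else α - 1 := by
  have h2 : n % 2 = 1 := by omega
  have h3 : 3 ≤ n := by omega
  have hα0 : α ≠ 0 := ne_of_gt hα
  have hwlt := w.isLt
  have hcast : (n:ℝ) = 2*(k:ℝ)+1 := by rw [hn]; push_cast; ring
  rw [vW, mu19_col hn hk w (fun m => V18 n α m w) α]
  by_cases hw0 : w.val = 0
  · rw [if_pos hw0]
    have e1 : ∑ t ∈ Finset.Icc 1 k, (1/α) * V18 n α (gT t w) w = 0 := by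
      refine Finset.sum_eq_zero (fun t ht => ?_)
      simp only [Finset.mem_Icc] at ht
      have hv : (gT t w).val = 2*t - 1 := by
        rw [gT_val h2 (by omega)]; unfold tauT sigP; split_ifs <;> omega
      rw [V18_e0 (by omega) (by omega) (by omega), mul_zero]
    have hvL : (gL w).val = n - 1 := by
      rw [gL_val h2 h3]; unfold tauL sigP; split_ifs <;> omega
    have hvP : (fP w).val = 0 := by
      rw [fP_val h2]; unfold sigP; split_ifs <;> omega
    rw [e1, V18_ea (by omega) (Or.inr (by omega)), V18_e1 (by omega)]
    field_simp; ring
  · rw [if_neg hw0]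
    by_cases hw1 : w.val % 2 = 1
    · rw [if_pos hw1]
      have e1 : ∑ t ∈ Finset.Icc 1 k, (1/α) * V18 n α (gT t w) w = 0 := by
        refine Finset.sum_eq_zero (fun t ht => ?_)
        simp only [Finset.mem_Icc] at ht
        have hv : (gT t w).val = w.val + 1 := by
          rw [gT_val h2 (by omega)]; unfold tauT sigP; split_ifs <;> omega
        rw [V18_e0 (by omega) (by omega) (by omega), mul_zero]
      have hvP : (fP w).val = w.val + 1 := by
        rw [fP_val h2]; unfold sigP; split_ifs <;> omega
      have eL : V18 n α (gL w) w = 0 := by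
        by_cases hwn : w.val = n - 2
        · have hvL : (gL w).val = 0 := by
            rw [gL_val h2 h3]; unfold tauL sigP; split_ifs <;> omega
          exact V18_e0 (by omega) (by omega) (by omega)
        · have hvL : (gL w).val = w.val + 1 := by
            rw [gL_val h2 h3]; unfold tauL sigP; split_ifs <;> omega
          exact V18_e0 (by omega) (by omega) (by omega)
      rw [e1, eL, V18_e0 (by omega) (by omega) (by omega)]
      ring
    · rw [if_neg hw1]
      have e1 : ∑ t ∈ Finset.Icc 1 k, (1/α) * V18 n α (gT t w) w = (k:ℝ) - 1 := by
        have step : ∀ t ∈ Finset.Icc 1 k, (1/α) * V18 n α (gT t w) w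
            = 1 - (if t = w.val/2 then (1:ℝ) else 0) := by
          intro t ht
          simp only [Finset.mem_Icc] at ht
          by_cases hte : t = w.val/2
          · rw [if_pos hte, hte]
            have hv : (gT (w.val/2) w).val = 0 := by
              rw [gT_val h2 (by omega)]; unfold tauT sigP; split_ifs <;> omega
            rw [V18_e0 (by omega) (by omega) (by omega)]; ring
          · rw [if_neg hte]
            have hv : (gT t w).val = w.val - 1 := by
              rw [gT_val h2 (by omega)]; unfold tauT sigP; split_ifs <;> omega
            rw [V18_ea (by omega) (Or.inl (by omega))]; field_simp; ring
        rw [Finset.sum_congr rfl step, Finset.sum_sub_distrib, Finset.sum_const,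
          Nat.card_Icc, Finset.sum_ite_eq' (Finset.Icc 1 k) (w.val/2) (fun _ => (1:ℝ)),
          if_pos (by simp only [Finset.mem_Icc]; omega)]
        simp
      have hvL : (gL w).val = w.val - 1 := by
        rw [gL_val h2 h3]; unfold tauL sigP; split_ifs <;> omega
      have hvP : (fP w).val = w.val - 1 := by
        rw [fP_val h2]; unfold sigP; split_ifs <;> omega
      rw [e1, V18_ea (by omega) (Or.inl (by omega)),
        V18_ea (by omega) (Or.inl (by omega)), hcast]
      field_simp; ring

lemma sum_parity (k : ℕ) (h : ℕ → ℝ) (a b e : ℝ) (h0 : h 0 = a)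
    (hod : ∀ i, i % 2 = 1 → i < 2*k+1 → h i = b)
    (hev : ∀ i, i % 2 = 0 → 0 < i → i < 2*k+1 → h i = e) :
    ∑ i ∈ Finset.range (2*k+1), h i = a + k*b + k*e := by
  induction k with
  | zero => simpa using h0
  | succ k ih =>
    have e1 : 2*(k+1)+1 = (2*k+1+1)+1 := by ring
    rw [e1, Finset.sum_range_succ, Finset.sum_range_succ,
      ih (fun i hi hlt => hod i hi (by omega)) (fun i hi hp hlt => hev i hi hp (by omega)),
      hod (2*k+1) (by omega) (by omega), hev (2*k+1+1) (by omega) (by omega) (by omega)]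
    push_cast; ring

lemma muOpt19_nn {n : ℕ} (i j : Fin n) : 0 ≤ muOpt19 n i j := by
  unfold muOpt19; split_ifs <;> norm_num

lemma nu19_nn {n t : ℕ} (i j : Fin n) : 0 ≤ nu19 n t i j := by
  unfold nu19 muOpt19; split_ifs <;> norm_num

lemma nuLast19_nn {n : ℕ} (i j : Fin n) : 0 ≤ nuLast19 n i j := by
  unfold nuLast19 muOpt19; split_ifs <;> norm_num

theorem stmt19 (n : ℕ) (hodd : Odd n) (hpos : 0 < n) (α : ℝ)
    (hα : (n : ℝ) + 2 < α) :
    IsFrac (mu19 n α) ∧ IsStable (U18 n α) (V18 n α) (mu19 n α) ∧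
    ((n : ℝ) - 1) * α < welfare (U18 n α) (V18 n α) (mu19 n α) := by
  have h2 : n % 2 = 1 := Nat.odd_iff.mp hodd
  have hα0 : 0 < α := by
    have : (0:ℝ) ≤ (n:ℝ) := Nat.cast_nonneg n
    linarith
  have hα0' : α ≠ 0 := ne_of_gt hα0
  by_cases hn1 : n = 1
  · -- degenerate case n = 1
    subst hn1
    have hmu : ∀ i j : Fin 1, mu19 1 α i j = 1 := by
      intro i j
      have hi : i.val = 0 := by omega
      have hj : j.val = 0 := by omega
      unfold mu19 nu19 nuLast19 muOpt19
      rw [Finset.Icc_eq_empty (by norm_num), Finset.sum_empty]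
      simp only [hi, hj]
      norm_num
      field_simp
      ring
    have huM : ∀ m : Fin 1, uM (U18 1 α) (mu19 1 α) m = 1 := by
      intro m
      rw [uM, Fin.sum_univ_one, hmu, U18_e1 (by omega), mul_one]
    have hvW : ∀ w : Fin 1, vW (V18 1 α) (mu19 1 α) w = 1 := by
      intro w
      rw [vW, Fin.sum_univ_one, hmu, V18_e1 (by omega), mul_one]
    refine ⟨⟨fun m w => by rw [hmu]; norm_num,
      fun m => by rw [Fin.sum_univ_one, hmu],
      fun w => by rw [Fin.sum_univ_one, hmu]⟩,
      fun m w => Or.inl (by rw [huM, U18_e1 (by omega)]),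
      ?_⟩
    rw [welfare, Fin.sum_univ_one, Fin.sum_univ_one, huM, hvW]
    norm_num
  · obtain ⟨k, hn, hk⟩ : ∃ k, n = 2*k+1 ∧ 1 ≤ k := ⟨(n-1)/2, by omega, by omega⟩
    have h3 : 3 ≤ n := by omega
    have hcast : (n:ℝ) = 2*(k:ℝ)+1 := by rw [hn]; push_cast; ring
    have hd : ((n:ℝ)+1)/(2*α) < 1 := by
      rw [div_lt_one (by linarith)]; linarith
    have hd0 : 0 ≤ ((n:ℝ)+1)/(2*α) := by positivity
    have hk1 : (1:ℝ) ≤ (k:ℝ) := by exact_mod_cast hk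
    -- nonnegativity of utilities
    have huMnn : ∀ m, 0 ≤ uM (U18 n α) (mu19 n α) m := by
      intro m
      rw [uM_eval hn hk hα0 m]
      split_ifs <;> linarith
    have hvWnn : ∀ w, 0 ≤ vW (V18 n α) (mu19 n α) w := by
      intro w
      rw [vW_eval hn hk hα0 w]
      split_ifs <;> linarith
    refine ⟨⟨?_, ?_, ?_⟩, ?_, ?_⟩
    · -- nonneg entries
      intro m w
      unfold mu19
      have c1 : (0:ℝ) ≤ 1/α := by positivity
      have c2 : (0:ℝ) ≤ 1 - ((n:ℝ)+1)/(2*α) := by linarith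
      refine add_nonneg (add_nonneg (Finset.sum_nonneg fun t _ => mul_nonneg c1 (nu19_nn m w)) (mul_nonneg c1 (nuLast19_nn m w))) (mul_nonneg c2 (muOpt19_nn m w))
    · -- row sums
      intro m
      have h := mu19_row hn hk m (fun _ => (1:ℝ)) α
      simp only [one_mul, mul_one] at h
      rw [h, Finset.sum_const, Nat.card_Icc, nsmul_eq_mul, Nat.add_sub_cancel, hcast]
      have : (k:ℝ) * (1/α) + 1/α + (1 - (2*(k:ℝ)+1+1)/(2*α)) = 1 := by field_simp; ring
      linarith [this.le]
    · -- col sums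
      intro w
      have h := mu19_col hn hk w (fun _ => (1:ℝ)) α
      simp only [one_mul, mul_one] at h
      rw [h, Finset.sum_const, Nat.card_Icc, nsmul_eq_mul, Nat.add_sub_cancel, hcast]
      have : (k:ℝ) * (1/α) + 1/α + (1 - (2*(k:ℝ)+1+1)/(2*α)) = 1 := by field_simp; ring
      linarith [this.le]
    · -- stability
      intro m w
      by_cases hm0 : m.val = 0
      · by_cases hw0 : w.val = 0
        · right
          rw [V18_e1 (by omega), vW_eval hn hk hα0 w, if_pos hw0]
          linarith
        · left
          rw [U18_e0 (by omega) (by omega) (by omega)]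
          exact huMnn m
      · by_cases hm1 : m.val % 2 = 1
        · by_cases hw0 : w.val = 0
          · right
            rw [V18_e0 (by omega) (by omega) (by omega)]
            exact hvWnn w
          · left
            rw [uM_eval hn hk hα0 m, if_neg hm0, if_pos hm1, U18_val]
            split_ifs <;> first | (exfalso; omega) | norm_num
        · by_cases hml : m.val = n-1
          · by_cases hwn : w.val = n-2
            · right
              rw [V18_e0 (by omega) (by omega) (by omega)]
              exact hvWnn w
            · left
              rw [uM_eval hn hk hα0 m, if_neg hm0, if_neg hm1, if_pos hml, U18_val]
              have hn3 : (3:ℝ) ≤ (n:ℝ) := by exact_mod_cast h3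
              split_ifs <;> first | (exfalso; omega) | linarith
          · left
            rw [uM_eval hn hk hα0 m, if_neg hm0, if_neg hm1, if_neg hml, U18_val]
            have hn3 : (3:ℝ) ≤ (n:ℝ) := by exact_mod_cast h3
            split_ifs <;> linarith
    · -- welfare
      have hu : ∑ m, uM (U18 n α) (mu19 n α) m
          = (1 - ((n:ℝ)+1)/(2*α)) + k*1 + k*α + (-1) := by
        have step1 : ∑ m, uM (U18 n α) (mu19 n α) m
            = ∑ i ∈ Finset.range n, (fun i : ℕ => if i = 0 then 1 - ((n:ℝ)+1)/(2*α)
                else if i % 2 = 1 then 1 else if i = n-1 then α - 1 else α) i := by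
          rw [← Fin.sum_univ_eq_sum_range]
          exact Finset.sum_congr rfl (fun m _ => uM_eval hn hk hα0 m)
        have step2 : ∀ i : ℕ, (if i = 0 then 1 - ((n:ℝ)+1)/(2*α)
              else if i % 2 = 1 then (1:ℝ) else if i = n-1 then α - 1 else α)
            = (if i = 0 then 1 - ((n:ℝ)+1)/(2*α) else if i % 2 = 1 then (1:ℝ) else α)
              + (if i = n-1 then (-1:ℝ) else 0) := by
          intro i; split_ifs <;> first | (exfalso; omega) | ring
        rw [step1]
        simp only [step2]
        rw [Finset.sum_add_distrib, Finset.sum_ite_eq' (Finset.range n) (n-1) (fun _ => (-1:ℝ)),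
          if_pos (Finset.mem_range.mpr (by omega))]
        congr 1
        rw [hn]
        exact sum_parity k _ _ _ _ (by norm_num) (fun i hi hlt => by
            rw [if_neg (by omega), if_pos hi])
          (fun i hi hp hlt => by rw [if_neg (by omega), if_neg (by omega)])
      have hv : ∑ w, vW (V18 n α) (mu19 n α) w
          = (2 - ((n:ℝ)+1)/(2*α)) + k*0 + k*(α-1) := by
        have step1 : ∑ w, vW (V18 n α) (mu19 n α) w
            = ∑ i ∈ Finset.range n, (fun i : ℕ => if i = 0 then 2 - ((n:ℝ)+1)/(2*α)
                else if i % 2 = 1 then (0:ℝ) else α - 1) i := by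
          rw [← Fin.sum_univ_eq_sum_range]
          exact Finset.sum_congr rfl (fun w _ => vW_eval hn hk hα0 w)
        rw [step1, hn]
        exact sum_parity k _ _ _ _ (by norm_num) (fun i hi hlt => by
            rw [if_neg (by omega), if_pos hi])
          (fun i hi hp hlt => by rw [if_neg (by omega), if_neg (by omega)])
      rw [welfare, hu, hv, hcast]
      have hlt : (2*(k:ℝ)+1+1)/(2*α) < 1 := by rw [← hcast]; exact hd
      nlinarith [hlt]
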